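/- If u and v are Lyndon words over an ordered alphabet, then u < v in the lexicographic order if and only if the concatenation uv is a Lyndon word. -/

import Mathlib

/-- A word is primitive if it is not a proper power: `w = v^n` implies `n = 1`. -/
def Primitive {α : Type*} (w : List α) : Prop :=
  ∀ (v : List α) (n : ℕ), w = (List.replicate n v).flatten → n = 1

/-- A Lyndon word: nonempty and lexicographically strictly smaller than all
its proper nonempty suffixes. -/
def Lyndon {α : Type*} [LinearOrder α] (w : List α) : Prop :=
  w ≠ [] ∧ ∀ u v : List α, w = u ++ v → u ≠ [] → v ≠ [] → List.Lex (· < ·) w v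

/-- A Lyndon word for the reversed order `1 < 0` on `Bool`. -/
def LyndonRev (w : List Bool) : Prop :=
  w ≠ [] ∧ ∀ u v : List Bool, w = u ++ v → u ≠ [] → v ≠ [] → List.Lex (· > ·) w v

/-- A binary word is balanced if the numbers of `1`s in any two factors of the
same length differ by at most 1. (`false` plays the role of `0`, `true` of `1`.) -/
def Balanced01 (w : List Bool) : Prop :=
  ∀ u v : List Bool, u <:+: w → v <:+: w → u.length = v.length →
    (u.count true : ℤ) - (v.count true : ℤ) ≤ 1

/-- `w` has period `p`: `w[i] = w[i+p]` for all valid indices. -/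
def HasPeriod (w : List Bool) (p : ℕ) : Prop :=
  ∀ i : ℕ, i + p < w.length → w[i]? = w[i + p]?

/-- A central word: it has coprime periods `p`, `q` and length `p + q - 2`. -/
def Central (w : List Bool) : Prop :=
  ∃ p q : ℕ, Nat.Coprime p q ∧ HasPeriod w p ∧ HasPeriod w q ∧ w.length + 2 = p + q

/-- The lower Christoffel word of slope `b/a`: letter `i` is `1` (`true`) iff the
line `y = bx/(a+b)`... encoded via floor differences `⌊(i+1)b/(a+b)⌋ - ⌊ib/(a+b)⌋`. -/
def chr (a b : ℕ) : List Bool :=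
  List.ofFn (fun i : Fin (a + b) =>
    decide ((i : ℕ) * b / (a + b) < ((i : ℕ) + 1) * b / (a + b)))

/-- An (upward) digitally convex word: all factors of its Lyndon factorization
(for the order `0 < 1`) are balanced Lyndon words, i.e. primitive lower
Christoffel words. -/
def DC (w : List Bool) : Prop :=
  ∃ L : List (List Bool), L.flatten = w ∧ (∀ x ∈ L, Lyndon x ∧ Balanced01 x) ∧
    L.Chain' (fun a b => ¬ List.Lex (· < ·) a b)

/-- A downward digitally convex word: all factors of its Lyndon factorization
for the order `1 < 0` are balanced. -/
def DCdown (w : List Bool) : Prop :=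
  ∃ L : List (List Bool), L.flatten = w ∧ (∀ x ∈ L, LyndonRev x ∧ Balanced01 x) ∧
    L.Chain' (fun a b => ¬ List.Lex (· > ·) a b)

/-- `(u, v)` is the standard factorization of `u ++ v`: both parts nonempty and
`v` is the lexicographically least proper nonempty suffix of `u ++ v`. -/
def StdFact (u v : List Bool) : Prop :=
  u ≠ [] ∧ v ≠ [] ∧
    ∀ s : List Bool, s ≠ [] → s ≠ u ++ v → s <:+ u ++ v →
      s = v ∨ List.Lex (· < ·) v s

/-- A word is unbordered if it has no nonempty proper border. -/
def Unbordered (w : List Bool) : Prop :=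
  ∀ u : List Bool, u <+: w → u <:+ w → u ≠ w → u = []

section LyndonAux
variable {α : Type*} [LinearOrder α]

lemma lex_append_left_iff (w : List α) {a b : List α} :
    List.Lex (· < ·) (w ++ a) (w ++ b) ↔ List.Lex (· < ·) a b := by
  induction w with
  | nil => rfl
  | cons x s ih => simpa [List.lex_cons_iff] using ih

lemma lex_decomp {u v : List α} (h : List.Lex (· < ·) u v) :
    (∃ w, w ≠ [] ∧ v = u ++ w) ∨
      ∃ (p s t : List α) (x y : α), x < y ∧ u = p ++ x :: s ∧ v = p ++ y :: t := by
  induction h with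
  | nil => exact Or.inl ⟨_, by simp, rfl⟩
  | @rel x s y t hxy => exact Or.inr ⟨[], s, t, x, y, hxy, rfl, rfl⟩
  | @cons a l₁ l₂ h ih =>
    rcases ih with ⟨w, hw, rfl⟩ | ⟨p, s, t, x, y, hxy, rfl, rfl⟩
    · exact Or.inl ⟨w, hw, rfl⟩
    · exact Or.inr ⟨a :: p, s, t, x, y, hxy, rfl, rfl⟩

lemma lex_trans' {a b c : List α} (h1 : List.Lex (· < ·) a b)
    (h2 : List.Lex (· < ·) b c) : List.Lex (· < ·) a c :=
  _root_.lt_trans (α := List α) h1 h2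

lemma lex_append_self {u v : List α} (h : List.Lex (· < ·) u v)
    (hv : Lyndon v) (hu : u ≠ []) : List.Lex (· < ·) (u ++ v) v := by
  rcases lex_decomp h with ⟨w, hw, rfl⟩ | ⟨p, s, t, x, y, hxy, rfl, rfl⟩
  · have : List.Lex (· < ·) (u ++ (u ++ w)) (u ++ w) := by
      rw [lex_append_left_iff]
      exact hv.2 u w rfl hu hw
    exact this
  · have : (p ++ x :: s) ++ (p ++ y :: t) = p ++ x :: (s ++ (p ++ y :: t)) := by simp
    rw [this]
    exact (lex_append_left_iff p).mpr (List.Lex.rel hxy)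

end LyndonAux

/-- If `u` and `v` are Lyndon words, then `u < v` iff `uv` is a Lyndon word. -/
theorem stmt1 {α : Type*} [LinearOrder α] {u v : List α}
    (hu : Lyndon u) (hv : Lyndon v) :
    List.Lex (· < ·) u v ↔ Lyndon (u ++ v) := by
  constructor
  · intro huv
    refine ⟨by simp [hu.1], ?_⟩
    intro a b hab ha hb
    rcases List.append_eq_append_iff.mp hab.symm with ⟨s, hs1, hs2⟩ | ⟨c, hc1, hc2⟩
    · -- u = a ++ s, b = s ++ v
      subst hs1 hs2
      rcases eq_or_ne s [] with rfl | hs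
      · simpa using lex_append_self huv hv hu.1
      · have hus : List.Lex (· < ·) (a ++ s) s := hu.2 a s rfl ha hs
        rcases lex_decomp hus with ⟨w, hw, hww⟩ | ⟨p, s', t, x, y, hxy, he1, he2⟩
        · exfalso
          have hl := congrArg List.length hww
          rw [List.length_append, List.length_append] at hl
          have := List.length_pos_iff.mpr ha
          omega
        · have g1 : a ++ s ++ v = p ++ x :: (s' ++ v) := by
            rw [he1]; simp
          have g2 : s ++ v = p ++ y :: (t ++ v) := by rw [he2]; simp
          rw [g1, g2]
          exact (lex_append_left_iff p).mpr (List.Lex.rel hxy)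
    · -- a = u ++ c, v = c ++ b
      have key : List.Lex (· < ·) (u ++ v) v := lex_append_self huv hv hu.1
      rcases eq_or_ne c [] with rfl | hc
      · simp only [List.nil_append] at hc2
        rwa [← hc2]
      · have : List.Lex (· < ·) v b := hv.2 c b hc2 hc hb
        exact lex_trans' key this
  · intro hl
    have h1 : List.Lex (· < ·) (u ++ v) v := hl.2 u v rfl hu.1 hv.1
    have h2 : List.Lex (· < ·) u (u ++ v) := by
      conv_lhs => rw [← List.append_nil u]
      rw [lex_append_left_iff]
      cases v with
      | nil => exact absurd rfl hv.1
      | cons c t => exact List.Lex.nil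
    exact lex_trans' h2 h1
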